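/- Let d ≥ 1, N an even positive integer, S ⊆ 𝕋^d measurable, and B ⊆ 𝕋^d × 𝕋^d measurable such that whenever x − y, x, x + y ∈ S one has (x, y) ∈ B. For θ, α ∈ 𝕋^d let T(A_{θ,α}) denote the number of nontrivial 3-term arithmetic progressions in A_{θ,α} = {n ∈ {1,…,N} : θn + α ∈ S}. Then the expectation of T(A_{θ,α}) over uniform independent θ, α is at most N² · vol(B) / 2. -/

import Mathlib

open MeasureTheory
open scoped Classical

noncomputable section Stmt12Aux

abbrev Stmt12X (d : ℕ) := Fin d → AddCircle (1 : ℝ)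

instance : IsProbabilityMeasure (volume : Measure (AddCircle (1 : ℝ))) :=
  ⟨by rw [AddCircle.measure_univ]; norm_num⟩

lemma stmt12_mp_smul (d : ℕ) {m : ℕ} (hm : 0 < m) :
    MeasurePreserving (fun x : Stmt12X d => m • x) volume volume := by
  have h := MeasureTheory.Measure.measurePreserving_zsmul (volume : Measure (Stmt12X d))
    (n := (m : ℤ)) (by exact_mod_cast hm.ne')
  simpa [natCast_zsmul] using h

lemma stmt12_mp_T (d : ℕ) {n m : ℕ} (hn : 0 < n) (hm : 0 < m) :
    MeasurePreserving (fun p : Stmt12X d × Stmt12X d => (n • p.1 + p.2, m • p.1))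
      volume volume := by
  have h1 : MeasurePreserving (fun p : Stmt12X d × Stmt12X d => (p.1, n • p.1 + p.2))
      ((volume : Measure (Stmt12X d)).prod volume)
      ((volume : Measure (Stmt12X d)).prod volume) := by
    refine MeasurePreserving.skew_product (MeasurePreserving.id _)
      (g := fun x y => n • x + y) ?_ ?_
    · exact ((stmt12_mp_smul d hn).measurable.comp measurable_fst).add measurable_snd
    · exact Filter.Eventually.of_forall fun x =>
        (measurePreserving_add_left volume (n • x)).map_eq
  have h2 : MeasurePreserving (Prod.map (fun x : Stmt12X d => m • x) (id : Stmt12X d → Stmt12X d))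
      ((volume : Measure (Stmt12X d)).prod volume)
      ((volume : Measure (Stmt12X d)).prod volume) :=
    (stmt12_mp_smul d hm).prod (MeasurePreserving.id _)
  have h3 := (MeasureTheory.Measure.measurePreserving_swap
      (μ := (volume : Measure (Stmt12X d)))
      (ν := (volume : Measure (Stmt12X d)))).comp (h2.comp h1)
  exact h3

lemma stmt12_integral (d : ℕ) {n m : ℕ} (hn : 0 < n) (hm : 0 < m)
    (B : Set (Stmt12X d × Stmt12X d)) (hB : MeasurableSet B) :
    ∫ p : Stmt12X d × Stmt12X d,
      B.indicator (fun _ => (1 : ℝ)) (n • p.1 + p.2, m • p.1) = (volume B).toReal := by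
  have hT := stmt12_mp_T d hn hm
  have hmeas : Measurable (B.indicator (fun _ => (1 : ℝ))) := measurable_const.indicator hB
  calc ∫ p : Stmt12X d × Stmt12X d,
        B.indicator (fun _ => (1 : ℝ)) (n • p.1 + p.2, m • p.1)
      = ∫ x, B.indicator (fun _ => (1 : ℝ)) x ∂(Measure.map
          (fun p : Stmt12X d × Stmt12X d => (n • p.1 + p.2, m • p.1)) volume) :=
        (integral_map hT.measurable.aemeasurable hmeas.aestronglyMeasurable).symm
    _ = ∫ x, B.indicator (fun _ => (1 : ℝ)) x := by rw [hT.map_eq]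
    _ = (volume B).toReal := by
        rw [integral_indicator (μ := volume) hB]
        simp
        rfl

end Stmt12Aux

theorem stmt_12 (d : ℕ) (hd : 1 ≤ d) (N : ℕ) (hN : 0 < N) (hNeven : Even N)
    (S : Set (Fin d → AddCircle (1 : ℝ))) (hS : MeasurableSet S)
    (B : Set ((Fin d → AddCircle (1 : ℝ)) × (Fin d → AddCircle (1 : ℝ))))
    (hB : MeasurableSet B)
    (hSB : ∀ x y : Fin d → AddCircle (1 : ℝ),
      x - y ∈ S → x ∈ S → x + y ∈ S → (x, y) ∈ B) :
    (∫ p : (Fin d → AddCircle (1 : ℝ)) × (Fin d → AddCircle (1 : ℝ)),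
      ((((Finset.Icc 1 N) ×ˢ (Finset.Icc 1 N)).filter
        (fun q : ℕ × ℕ =>
          q.1 - q.2 ∈ (Finset.Icc 1 N).filter (fun n => (fun i => n • p.1 i + p.2 i) ∈ S) ∧
          q.1 ∈ (Finset.Icc 1 N).filter (fun n => (fun i => n • p.1 i + p.2 i) ∈ S) ∧
          q.1 + q.2 ∈ (Finset.Icc 1 N).filter (fun n => (fun i => n • p.1 i + p.2 i) ∈ S))).card : ℝ))
    ≤ (N : ℝ) ^ 2 * (volume B).toReal / 2 := by
  set v : ℝ := (volume B).toReal with hv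
  have hv0 : 0 ≤ v := ENNReal.toReal_nonneg
  set s : Finset (ℕ × ℕ) := (Finset.Icc 1 N) ×ˢ (Finset.Icc 1 N) with hs
  set g : (Stmt12X d × Stmt12X d) → ℝ := fun p => ∑ q ∈ s,
    if q.2 < q.1 then B.indicator (fun _ => (1 : ℝ)) (q.1 • p.1 + p.2, q.2 • p.1) else 0
    with hg
  -- basic facts about membership in s
  have hmem : ∀ q : ℕ × ℕ, q ∈ s → 0 < q.1 ∧ 0 < q.2 := by
    intro q hq
    rw [hs, Finset.mem_product, Finset.mem_Icc, Finset.mem_Icc] at hq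
    omega
  -- pointwise bound
  have hpoint : ∀ p : Stmt12X d × Stmt12X d,
      ((((Finset.Icc 1 N) ×ˢ (Finset.Icc 1 N)).filter
        (fun q : ℕ × ℕ =>
          q.1 - q.2 ∈ (Finset.Icc 1 N).filter (fun n => (fun i => n • p.1 i + p.2 i) ∈ S) ∧
          q.1 ∈ (Finset.Icc 1 N).filter (fun n => (fun i => n • p.1 i + p.2 i) ∈ S) ∧
          q.1 + q.2 ∈ (Finset.Icc 1 N).filter (fun n => (fun i => n • p.1 i + p.2 i) ∈ S))).card : ℝ)
      ≤ g p := by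
    intro p
    rw [Finset.card_filter]
    push_cast
    rw [hg]
    apply Finset.sum_le_sum
    intro q hq
    by_cases hcond : (q.1 - q.2 ∈ (Finset.Icc 1 N).filter
          (fun n => (fun i => n • p.1 i + p.2 i) ∈ S) ∧
        q.1 ∈ (Finset.Icc 1 N).filter (fun n => (fun i => n • p.1 i + p.2 i) ∈ S) ∧
        q.1 + q.2 ∈ (Finset.Icc 1 N).filter (fun n => (fun i => n • p.1 i + p.2 i) ∈ S))
    · have h1 := hcond.1
      have h2 := hcond.2.1
      have h3 := hcond.2.2
      rw [Finset.mem_filter, Finset.mem_Icc] at h1 h2 h3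
      have hlt : q.2 < q.1 := by omega
      obtain ⟨k, hk⟩ : ∃ k, q.1 = k + q.2 := ⟨q.1 - q.2, by omega⟩
      have hxy : ((fun i => q.1 • p.1 i + p.2 i), (fun i => q.2 • p.1 i)) ∈ B := by
        apply hSB
        · have he : ((fun i => q.1 • p.1 i + p.2 i) - fun i => q.2 • p.1 i)
              = fun i => (q.1 - q.2) • p.1 i + p.2 i := by
            funext i
            simp only [Pi.sub_apply]
            rw [hk, Nat.add_sub_cancel, add_nsmul]
            abel
          rw [he]
          exact h1.2
        · exact h2.2
        · have he : ((fun i => q.1 • p.1 i + p.2 i) + fun i => q.2 • p.1 i)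
              = fun i => (q.1 + q.2) • p.1 i + p.2 i := by
            funext i
            simp only [Pi.add_apply]
            rw [add_nsmul]
            abel
          rw [he]
          exact h3.2
      have hxy' : (q.1 • p.1 + p.2, q.2 • p.1) ∈ B := hxy
      rw [if_pos hcond, if_pos hlt, Set.indicator_of_mem hxy']
    · rw [if_neg hcond]
      by_cases hlt : q.2 < q.1
      · rw [if_pos hlt]
        exact Set.indicator_nonneg (fun _ _ => zero_le_one) _
      · rw [if_neg hlt]
  -- integrability of each term of g
  have hterm_int : ∀ q ∈ s, Integrable (fun p : Stmt12X d × Stmt12X d =>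
      if q.2 < q.1 then B.indicator (fun _ => (1 : ℝ)) (q.1 • p.1 + p.2, q.2 • p.1) else 0)
      volume := by
    intro q hq
    by_cases hlt : q.2 < q.1
    · simp only [if_pos hlt]
      have hT := stmt12_mp_T d (hmem q hq).1 (hmem q hq).2
      have hmeas : Measurable (B.indicator (fun _ => (1 : ℝ))) := measurable_const.indicator hB
      have h : Integrable (B.indicator (fun _ => (1 : ℝ)))
          (Measure.map (fun p : Stmt12X d × Stmt12X d => (q.1 • p.1 + p.2, q.2 • p.1)) volume) := by
        rw [hT.map_eq]
        exact (integrable_const (1 : ℝ)).indicator hB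
      exact (integrable_map_measure hmeas.aestronglyMeasurable
        hT.measurable.aemeasurable).mp h
    · simp only [if_neg hlt]
      exact integrable_zero _ _ _
  have hg_int : Integrable g volume := by
    rw [hg]
    exact integrable_finset_sum s hterm_int
  -- compute the integral of g
  have hgint : ∫ p, g p = ∑ q ∈ s, if q.2 < q.1 then v else 0 := by
    rw [hg, integral_finset_sum s hterm_int]
    refine Finset.sum_congr rfl fun q hq => ?_
    by_cases hlt : q.2 < q.1
    · simp only [if_pos hlt]
      exact stmt12_integral d (hmem q hq).1 (hmem q hq).2 B hB
    · simp [hlt]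
  -- bound the sum
  have hswap : ∑ q ∈ s, (if q.2 < q.1 then v else 0)
      = ∑ q ∈ s, (if q.1 < q.2 then v else 0) := by
    rw [hs, Finset.sum_product, Finset.sum_product, Finset.sum_comm]
  have hcard : (s.card : ℝ) = (N : ℝ) ^ 2 := by
    rw [hs, Finset.card_product, Nat.card_Icc, Nat.add_sub_cancel]
    push_cast
    ring
  have hsum_bound : (∑ q ∈ s, (if q.2 < q.1 then v else 0))
      + (∑ q ∈ s, (if q.2 < q.1 then v else 0)) ≤ (N : ℝ) ^ 2 * v := by
    nth_rewrite 2 [hswap]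
    rw [← Finset.sum_add_distrib]
    calc (∑ q ∈ s, ((if q.2 < q.1 then v else 0) + (if q.1 < q.2 then v else 0)))
        ≤ ∑ _q ∈ s, v := by
          apply Finset.sum_le_sum
          intro q _
          split_ifs with h1 h2 <;> first | linarith | omega
      _ = (N : ℝ) ^ 2 * v := by
          rw [Finset.sum_const, nsmul_eq_mul, hcard]
  -- conclude
  by_cases hf : Integrable (fun p : Stmt12X d × Stmt12X d =>
      ((((Finset.Icc 1 N) ×ˢ (Finset.Icc 1 N)).filter
        (fun q : ℕ × ℕ =>
          q.1 - q.2 ∈ (Finset.Icc 1 N).filter (fun n => (fun i => n • p.1 i + p.2 i) ∈ S) ∧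
          q.1 ∈ (Finset.Icc 1 N).filter (fun n => (fun i => n • p.1 i + p.2 i) ∈ S) ∧
          q.1 + q.2 ∈ (Finset.Icc 1 N).filter (fun n => (fun i => n • p.1 i + p.2 i) ∈ S))).card : ℝ))
      volume
  · have hle := integral_mono hf hg_int hpoint
    rw [hgint] at hle
    linarith
  · rw [integral_undef hf]
    positivity
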